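/- If {S_n} is a non-increasing sequence of nonnegative bounded self-adjoint operators on a Hilbert space converging strongly to S, and K is a closed subspace, then (S_n)_K converges strongly to S_K. -/

import Mathlib

open ContinuousLinearMap

variable {H : Type*} [NormedAddCommGroup H] [InnerProductSpace ℂ H] [CompleteSpace H]

/-- `W` is the Kreĭn shorted operator of `S` with respect to the closed subspace `K`. -/
def IsShortedOp (S W : H →L[ℂ] H) (K : Submodule ℂ H) : Prop :=
  IsSelfAdjoint W ∧
    ∀ f : H, (inner ℂ (W f) f : ℂ).re = ⨅ φ : Kᗮ, (inner ℂ (S (f + φ)) (f + φ) : ℂ).re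

section Aux

open Filter

local notation "⟪" x ", " y "⟫" => @inner ℂ H _ x y

/-- Cauchy–Schwarz for the semi-inner product induced by a positive operator. -/
lemma pos_cs (T : H →L[ℂ] H) (hT : T.IsPositive) (x y : H) :
    ‖⟪T x, y⟫‖ * ‖⟪T y, x⟫‖ ≤ RCLike.re ⟪T x, x⟫ * RCLike.re ⟪T y, y⟫ := by
  have hsymm := (ContinuousLinearMap.isSelfAdjoint_iff_isSymmetric).mp hT.isSelfAdjoint
  letI c : PreInnerProductSpace.Core ℂ H :=
    { inner := fun u v => ⟪T u, v⟫
      conj_inner_symm := fun u v => by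
        show (starRingEnd ℂ) ⟪T v, u⟫ = ⟪T u, v⟫
        rw [inner_conj_symm]
        exact (hsymm u v).symm
      re_inner_nonneg := fun u => hT.re_inner_nonneg_left u
      add_left := fun u v z => by simp [inner_add_left]
      smul_left := fun u v r => by simp [inner_smul_left, mul_comm] }
  exact InnerProductSpace.Core.inner_mul_inner_self_le (𝕜 := ℂ) (F := H) x y

lemma pos_norm_apply_sq (T : H →L[ℂ] H) (hT : T.IsPositive) (x : H) :
    ‖T x‖ ^ 2 ≤ ‖T‖ * RCLike.re ⟪T x, x⟫ := by
  have h := pos_cs T hT x (T x)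
  have e1 : ‖⟪T x, T x⟫‖ = ‖T x‖ ^ 2 := by
    rw [inner_self_eq_norm_sq_to_K]
    simp [norm_pow]
  have hsymm := (ContinuousLinearMap.isSelfAdjoint_iff_isSymmetric).mp hT.isSelfAdjoint
  have e2 : ⟪T (T x), x⟫ = ⟪T x, T x⟫ := hsymm (T x) x
  rw [e1, e2, e1] at h
  have e3 : RCLike.re ⟪T (T x), T x⟫ ≤ ‖T‖ * ‖T x‖ ^ 2 :=
    calc RCLike.re ⟪T (T x), T x⟫ ≤ ‖⟪T (T x), T x⟫‖ := RCLike.re_le_norm _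
      _ ≤ ‖T (T x)‖ * ‖T x‖ := norm_inner_le_norm _ _
      _ ≤ (‖T‖ * ‖T x‖) * ‖T x‖ :=
        mul_le_mul_of_nonneg_right (T.le_opNorm (T x)) (norm_nonneg _)
      _ = ‖T‖ * ‖T x‖ ^ 2 := by ring
  rcases eq_or_ne ‖T x‖ 0 with h0 | h0
  · rw [h0]
    simpa using mul_nonneg (norm_nonneg T) (hT.re_inner_nonneg_left x)
  · have hpos : 0 < ‖T x‖ := lt_of_le_of_ne (norm_nonneg _) (Ne.symm h0)
    have hA2 : 0 < ‖T x‖ ^ 2 := by positivity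
    nlinarith [mul_le_mul_of_nonneg_left e3 (hT.re_inner_nonneg_left x), hA2]

lemma pos_norm_le (T : H →L[ℂ] H) (hT : T.IsPositive) {c : ℝ} (hc0 : 0 ≤ c)
    (hc : ∀ x, RCLike.re ⟪T x, x⟫ ≤ c * ‖x‖ ^ 2) : ‖T‖ ≤ c := by
  have hb : ∀ x, ‖T x‖ ≤ Real.sqrt (‖T‖ * c) * ‖x‖ := by
    intro x
    have h1 := pos_norm_apply_sq T hT x
    have h2 := hc x
    have h3 : ‖T x‖ ^ 2 ≤ (Real.sqrt (‖T‖ * c) * ‖x‖) ^ 2 := by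
      rw [mul_pow, Real.sq_sqrt (mul_nonneg (norm_nonneg T) hc0)]
      nlinarith [hT.re_inner_nonneg_left x, norm_nonneg T]
    have := Real.sqrt_le_sqrt h3
    rwa [Real.sqrt_sq (norm_nonneg _), Real.sqrt_sq (by positivity)] at this
  have h4 : ‖T‖ ≤ Real.sqrt (‖T‖ * c) := T.opNorm_le_bound (Real.sqrt_nonneg _) hb
  nlinarith [Real.sq_sqrt (mul_nonneg (norm_nonneg T) hc0), norm_nonneg T,
    Real.sqrt_nonneg (‖T‖ * c)]

end Aux

/-- If `{Sₙ}` is a non-increasing sequence of nonnegative bounded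
self-adjoint operators converging strongly to `S`, and `K` is a closed subspace,
then `(Sₙ)_K` converges strongly to `S_K`. -/
theorem shorted_strong_limit (S : ℕ → (H →L[ℂ] H)) (Slim : H →L[ℂ] H)
    (hpos : ∀ n, (S n).IsPositive)
    (hmono : ∀ n, (S n - S (n + 1)).IsPositive)
    (hconv : ∀ f : H, Filter.Tendsto (fun n => S n f) Filter.atTop (nhds (Slim f)))
    (K : Submodule ℂ H) (hK : IsClosed (K : Set H))
    (W : ℕ → (H →L[ℂ] H)) (Wlim : H →L[ℂ] H)
    (hW : ∀ n, IsShortedOp (S n) (W n) K) (hWlim : IsShortedOp Slim Wlim K) :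
    ∀ f : H, Filter.Tendsto (fun n => W n f) Filter.atTop (nhds (Wlim f)) := by
  classical
  set q : ℕ → H → ℝ := fun n g => (inner ℂ (S n g) g : ℂ).re with hq_def
  set ql : H → ℝ := fun g => (inner ℂ (Slim g) g : ℂ).re with hql_def
  have hq0 : ∀ n g, 0 ≤ q n g := fun n g => (hpos n).re_inner_nonneg_left g
  have hq_anti : ∀ g, Antitone fun n => q n g := by
    intro g
    apply antitone_nat_of_succ_le
    intro n
    have := (hmono n).re_inner_nonneg_left g
    simp only [sub_apply, inner_sub_left, map_sub] at this
    simpa [q] using this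
  have hqtend : ∀ g, Filter.Tendsto (fun n => q n g) Filter.atTop (nhds (ql g)) := by
    intro g
    exact (Complex.continuous_re.tendsto _).comp
      ((hconv g).inner tendsto_const_nhds)
  have hql_le : ∀ n g, ql g ≤ q n g := by
    intro n g
    refine le_of_tendsto (hqtend g) ?_
    filter_upwards [Filter.eventually_ge_atTop n] with m hm
    exact hq_anti g hm
  have hql0 : ∀ g, 0 ≤ ql g := fun g => ge_of_tendsto' (hqtend g) fun n => hq0 n g
  have hq_bound : ∀ n g, q n g ≤ ‖S 0‖ * ‖g‖ ^ 2 := by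
    intro n g
    calc q n g ≤ q 0 g := hq_anti g (Nat.zero_le n)
      _ ≤ ‖(inner ℂ (S 0 g) g : ℂ)‖ := by
        simpa using RCLike.re_le_norm (inner ℂ (S 0 g) g : ℂ)
      _ ≤ ‖S 0 g‖ * ‖g‖ := norm_inner_le_norm _ _
      _ ≤ (‖S 0‖ * ‖g‖) * ‖g‖ :=
        mul_le_mul_of_nonneg_right ((S 0).le_opNorm g) (norm_nonneg _)
      _ = ‖S 0‖ * ‖g‖ ^ 2 := by ring
  -- positivity of the shorted operators
  have hbddb : ∀ g : H, BddBelow (Set.range fun φ : Kᗮ => ql (g + φ)) := by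
    intro g
    refine ⟨0, ?_⟩
    rintro _ ⟨φ, rfl⟩
    exact hql0 _
  have hbdda : ∀ n (g : H), BddBelow (Set.range fun φ : Kᗮ => q n (g + φ)) := by
    intro n g
    refine ⟨0, ?_⟩
    rintro _ ⟨φ, rfl⟩
    exact hq0 _ _
  have hWform : ∀ n g, (inner ℂ (W n g) g : ℂ).re = ⨅ φ : Kᗮ, q n (g + φ) := fun n g =>
    (hW n).2 g
  have hWlimform : ∀ g, (inner ℂ (Wlim g) g : ℂ).re = ⨅ φ : Kᗮ, ql (g + φ) := fun g =>
    hWlim.2 g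
  have hWlim_le_W : ∀ n g, (inner ℂ (Wlim g) g : ℂ).re ≤ (inner ℂ (W n g) g : ℂ).re := by
    intro n g
    rw [hWform, hWlimform]
    exact ciInf_mono (hbddb g) fun φ => hql_le n _
  have hWlim_nonneg : ∀ g, 0 ≤ (inner ℂ (Wlim g) g : ℂ).re := by
    intro g
    rw [hWlimform]
    exact Real.iInf_nonneg fun φ => hql0 _
  have hW_nonneg : ∀ n g, 0 ≤ (inner ℂ (W n g) g : ℂ).re := fun n g =>
    le_trans (hWlim_nonneg g) (hWlim_le_W n g)
  have hW_le : ∀ n g, (inner ℂ (W n g) g : ℂ).re ≤ ‖S 0‖ * ‖g‖ ^ 2 := by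
    intro n g
    rw [hWform]
    have h1 : (⨅ φ : Kᗮ, q n (g + φ)) ≤ q n (g + (0 : Kᗮ)) := ciInf_le (hbdda n g) 0
    have h2 : (g + ((0 : Kᗮ) : H)) = g := by simp
    rw [h2] at h1
    exact h1.trans (hq_bound n g)
  have hWlim_le : ∀ g, (inner ℂ (Wlim g) g : ℂ).re ≤ ‖S 0‖ * ‖g‖ ^ 2 := fun g =>
    (hWlim_le_W 0 g).trans (hW_le 0 g)
  have hS0 : (0 : ℝ) ≤ ‖S 0‖ := norm_nonneg _
  have hWpos : ∀ n, (W n).IsPositive := fun n => isPositive_def'.mpr ⟨(hW n).1, fun g => hW_nonneg n g⟩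
  have hWlimpos : Wlim.IsPositive := isPositive_def'.mpr ⟨hWlim.1, fun g => hWlim_nonneg g⟩
  have hWnorm : ∀ n, ‖W n‖ ≤ ‖S 0‖ := fun n =>
    pos_norm_le (W n) (hWpos n) hS0 (hW_le n)
  have hWlimnorm : ‖Wlim‖ ≤ ‖S 0‖ := pos_norm_le Wlim hWlimpos hS0 hWlim_le
  -- now fix f
  intro f
  set w : ℕ → ℝ := fun n => (inner ℂ (W n f) f : ℂ).re with hw_def
  set wl : ℝ := (inner ℂ (Wlim f) f : ℂ).re with hwl_def
  have hw_anti : Antitone w := by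
    intro n m hnm
    rw [hw_def]
    simp only
    rw [hWform, hWform]
    exact ciInf_mono (hbdda m f) fun φ => hq_anti _ hnm
  have hwbdd : BddBelow (Set.range w) := by
    refine ⟨0, ?_⟩
    rintro _ ⟨n, rfl⟩
    exact hW_nonneg n f
  have hwtend : Filter.Tendsto w Filter.atTop (nhds (⨅ n, w n)) :=
    tendsto_atTop_ciInf hw_anti hwbdd
  have hinf_eq : (⨅ n, w n) = wl := by
    refine le_antisymm ?_ (le_ciInf fun n => hWlim_le_W n f)
    rw [hwl_def, hWlimform]
    refine le_ciInf fun φ => ?_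
    refine ge_of_tendsto (hqtend (f + φ)) ?_
    filter_upwards with n
    calc (⨅ m, w m) ≤ w n := ciInf_le hwbdd n
      _ ≤ q n (f + φ) := by
        rw [hw_def]; simp only; rw [hWform]
        exact ciInf_le (hbdda n f) φ
  rw [hinf_eq] at hwtend
  have hdtend : Filter.Tendsto (fun n => w n - wl) Filter.atTop (nhds 0) := by
    simpa using hwtend.sub_const wl
  -- the quantitative bound
  have key : ∀ n, ‖W n f - Wlim f‖ ≤ Real.sqrt ((2 * ‖S 0‖) * (w n - wl)) := by
    intro n
    have hTpos : (W n - Wlim).IsPositive := by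
      refine isPositive_def'.mpr ⟨((hW n).1).sub hWlim.1, fun g => ?_⟩
      have : RCLike.re (inner ℂ ((W n - Wlim) g) g : ℂ) =
          (inner ℂ (W n g) g : ℂ).re - (inner ℂ (Wlim g) g : ℂ).re := by
        simp [sub_apply, inner_sub_left]
      rw [ContinuousLinearMap.reApplyInnerSelf, this]
      linarith [hWlim_le_W n g]
    have h1 := pos_norm_apply_sq (W n - Wlim) hTpos f
    have h2 : RCLike.re (inner ℂ ((W n - Wlim) f) f : ℂ) = w n - wl := by
      simp [sub_apply, inner_sub_left, hw_def, hwl_def]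
    have h3 : ‖W n - Wlim‖ ≤ 2 * ‖S 0‖ := by
      calc ‖W n - Wlim‖ ≤ ‖W n‖ + ‖Wlim‖ := norm_sub_le _ _
        _ ≤ 2 * ‖S 0‖ := by linarith [hWnorm n, hWlimnorm]
    have hd0 : 0 ≤ w n - wl := by linarith [hWlim_le_W n f]
    have h4 : ‖(W n - Wlim) f‖ ^ 2 ≤ (2 * ‖S 0‖) * (w n - wl) := by
      rw [h2] at h1
      refine h1.trans ?_
      exact mul_le_mul_of_nonneg_right h3 hd0
    have h5 : ‖(W n - Wlim) f‖ ≤ Real.sqrt ((2 * ‖S 0‖) * (w n - wl)) := by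
      have := Real.sqrt_le_sqrt h4
      rwa [Real.sqrt_sq (norm_nonneg _)] at this
    simpa [sub_apply] using h5
  rw [tendsto_iff_norm_sub_tendsto_zero]
  have hrhs : Filter.Tendsto (fun n => Real.sqrt ((2 * ‖S 0‖) * (w n - wl)))
      Filter.atTop (nhds 0) := by
    have h1 : Filter.Tendsto (fun n => (2 * ‖S 0‖) * (w n - wl)) Filter.atTop (nhds 0) := by
      simpa using hdtend.const_mul (2 * ‖S 0‖)
    have h2 := (Real.continuous_sqrt.tendsto 0).comp h1
    simpa only [Function.comp_def, Real.sqrt_zero] using h2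
  exact squeeze_zero (fun n => norm_nonneg _) key hrhs
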